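/- Let (u_k, v_k) follow mini-batch SGD on the u⊙v parametrisation: u_0 = √2·α, v_0 = 0, and u_{k+1} = u_k − γ_k ∇L_{B_k}(u_k ⊙ v_k) ⊙ v_k, v_{k+1} = v_k − γ_k ∇L_{B_k}(u_k ⊙ v_k) ⊙ u_k. Let (w_{+,k}, w_{−,k}) follow mini-batch SGD on the ½(w₊² − w₋²) parametrisation with the same stepsizes γ_k and the same batches B_k: w_{±,0} = α and w_{±,k+1} = (1 ∓ γ_k ∇L_{B_k}(½(w_{+,k}² − w_{−,k}²))) ⊙ w_{±,k}. Then for all k ≥ 0, u_k ⊙ v_k = ½(w_{+,k}² − w_{−,k}²). -/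
import Mathlib


open Finset Filter Real

noncomputable section

/-- Dot product on `Fin d → ℝ`. -/
def dotp {d : ℕ} (u v : Fin d → ℝ) : ℝ := ∑ j, u j * v j

/-- Batch loss `L_B(β) = (1/(2|B|)) ∑_{i∈B} (⟨x_i,β⟩ − y_i)²`. -/
def batchLoss {d n : ℕ} (x : Fin n → Fin d → ℝ) (y : Fin n → ℝ)
    (B : Finset (Fin n)) (β : Fin d → ℝ) : ℝ :=
  (1 / (2 * (B.card : ℝ))) * ∑ i ∈ B, (dotp (x i) β - y i) ^ 2

/-- Gradient of the batch loss. -/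
def gradBatch {d n : ℕ} (x : Fin n → Fin d → ℝ) (y : Fin n → ℝ)
    (B : Finset (Fin n)) (β : Fin d → ℝ) : Fin d → ℝ :=
  fun j => (1 / (B.card : ℝ)) * ∑ i ∈ B, (dotp (x i) β - y i) * x i j

/-- SGD on the `(w₊, w₋)` parametrisation of the diagonal linear network. -/
def Witer {d n : ℕ} (x : Fin n → Fin d → ℝ) (y : Fin n → ℝ) (α : Fin d → ℝ)
    (γ : ℕ → ℝ) (Bk : ℕ → Finset (Fin n)) : ℕ → (Fin d → ℝ) × (Fin d → ℝ)
  | 0 => (α, α)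
  | k + 1 =>
      let w := Witer x y α γ Bk k
      let β : Fin d → ℝ := fun j => ((w.1 j) ^ 2 - (w.2 j) ^ 2) / 2
      let g := gradBatch x y (Bk k) β
      (fun j => (1 - γ k * g j) * w.1 j, fun j => (1 + γ k * g j) * w.2 j)

/-- The prediction iterates `β_k = ½(w_{+,k}² − w_{−,k}²)`. -/
def betaIter {d n : ℕ} (x : Fin n → Fin d → ℝ) (y : Fin n → ℝ) (α : Fin d → ℝ)
    (γ : ℕ → ℝ) (Bk : ℕ → Finset (Fin n)) (k : ℕ) : Fin d → ℝ :=
  fun j => ((Witer x y α γ Bk k).1 j ^ 2 - (Witer x y α γ Bk k).2 j ^ 2) / 2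

/-- The stochastic gradient `∇L_{B_k}(β_k)` used at step `k`. -/
def gIter {d n : ℕ} (x : Fin n → Fin d → ℝ) (y : Fin n → ℝ) (α : Fin d → ℝ)
    (γ : ℕ → ℝ) (Bk : ℕ → Finset (Fin n)) (k : ℕ) : Fin d → ℝ :=
  gradBatch x y (Bk k) (betaIter x y α γ Bk k)

def qplus (t : ℝ) : ℝ := -2 * t - Real.log ((1 - t) ^ 2)

def qminus (t : ℝ) : ℝ := 2 * t - Real.log ((1 + t) ^ 2)

def qfun (t : ℝ) : ℝ := -(1 / 2) * Real.log ((1 - t ^ 2) ^ 2)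

/-- `α_{+,k}²` coordinatewise. -/
def alphaPlusSq {d n : ℕ} (x : Fin n → Fin d → ℝ) (y : Fin n → ℝ) (α : Fin d → ℝ)
    (γ : ℕ → ℝ) (Bk : ℕ → Finset (Fin n)) (k : ℕ) : Fin d → ℝ :=
  fun j => (α j) ^ 2 * Real.exp (-(∑ ℓ ∈ Finset.range k, qplus (γ ℓ * gIter x y α γ Bk ℓ j)))

/-- `α_{−,k}²` coordinatewise. -/
def alphaMinusSq {d n : ℕ} (x : Fin n → Fin d → ℝ) (y : Fin n → ℝ) (α : Fin d → ℝ)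
    (γ : ℕ → ℝ) (Bk : ℕ → Finset (Fin n)) (k : ℕ) : Fin d → ℝ :=
  fun j => (α j) ^ 2 * Real.exp (-(∑ ℓ ∈ Finset.range k, qminus (γ ℓ * gIter x y α γ Bk ℓ j)))

/-- `α_k² = α_{+,k} ⊙ α_{−,k}` coordinatewise. -/
def alphaSq {d n : ℕ} (x : Fin n → Fin d → ℝ) (y : Fin n → ℝ) (α : Fin d → ℝ)
    (γ : ℕ → ℝ) (Bk : ℕ → Finset (Fin n)) (k : ℕ) : Fin d → ℝ :=
  fun j => Real.sqrt (alphaPlusSq x y α γ Bk k j * alphaMinusSq x y α γ Bk k j)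

/-- `φ_k = ½ arcsinh((α_{+,k}² − α_{−,k}²)/(2α_k²))`. -/
def phiK {d n : ℕ} (x : Fin n → Fin d → ℝ) (y : Fin n → ℝ) (α : Fin d → ℝ)
    (γ : ℕ → ℝ) (Bk : ℕ → Finset (Fin n)) (k : ℕ) : Fin d → ℝ :=
  fun j => (1 / 2) * Real.arsinh ((alphaPlusSq x y α γ Bk k j - alphaMinusSq x y α γ Bk k j) /
    (2 * alphaSq x y α γ Bk k j))

/-- Hyperbolic entropy `ψ_a`, expressed in terms of the squared scale `aSq = a²`. -/
def psiSq {d : ℕ} (aSq : Fin d → ℝ) (β : Fin d → ℝ) : ℝ :=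
  (1 / 2) * ∑ j, (β j * Real.arsinh (β j / aSq j) - Real.sqrt ((β j) ^ 2 + (aSq j) ^ 2) + aSq j)

/-- The time-varying potential `h_k(β) = ψ_{α_k}(β) − ⟨φ_k, β⟩`. -/
def hK {d n : ℕ} (x : Fin n → Fin d → ℝ) (y : Fin n → ℝ) (α : Fin d → ℝ)
    (γ : ℕ → ℝ) (Bk : ℕ → Finset (Fin n)) (k : ℕ) (β : Fin d → ℝ) : ℝ :=
  psiSq (alphaSq x y α γ Bk k) β - dotp (phiK x y α γ Bk k) β

/-- The gradient of `h_k`: `∇h_k(β) = ½ arcsinh(β/α_k²) − φ_k` coordinatewise. -/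
def gradHK {d n : ℕ} (x : Fin n → Fin d → ℝ) (y : Fin n → ℝ) (α : Fin d → ℝ)
    (γ : ℕ → ℝ) (Bk : ℕ → Finset (Fin n)) (k : ℕ) (β : Fin d → ℝ) : Fin d → ℝ :=
  fun j => (1 / 2) * Real.arsinh (β j / alphaSq x y α γ Bk k j) - phiK x y α γ Bk k j

/-- Bregman divergence of `h_k`. -/
def DhK {d n : ℕ} (x : Fin n → Fin d → ℝ) (y : Fin n → ℝ) (α : Fin d → ℝ)
    (γ : ℕ → ℝ) (Bk : ℕ → Finset (Fin n)) (k : ℕ) (β β' : Fin d → ℝ) : ℝ :=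
  hK x y α γ Bk k β - hK x y α γ Bk k β' -
    dotp (gradHK x y α γ Bk k β') (fun j => β j - β' j)

/-- Euclidean norm on `Fin d → ℝ`. -/
def norm2 {d : ℕ} (v : Fin d → ℝ) : ℝ := Real.sqrt (∑ j, v j ^ 2)

/-- ℓ¹ norm on `Fin d → ℝ`. -/
def l1norm {d : ℕ} (v : Fin d → ℝ) : ℝ := ∑ j, |v j|

/-- `H_B β = (1/|B|) ∑_{i∈B} ⟨x_i, β⟩ x_i`. -/
def HBop {d n : ℕ} (x : Fin n → Fin d → ℝ) (B : Finset (Fin n)) (β : Fin d → ℝ) : Fin d → ℝ :=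
  fun j => (1 / (B.card : ℝ)) * ∑ i ∈ B, dotp (x i) β * x i j


/-- Mini-batch SGD on the `u ⊙ v` parametrisation, initialised at `u₀ = √2·α`, `v₀ = 0`. -/
def UViter {d n : ℕ} (x : Fin n → Fin d → ℝ) (y : Fin n → ℝ) (α : Fin d → ℝ)
    (γ : ℕ → ℝ) (Bk : ℕ → Finset (Fin n)) : ℕ → (Fin d → ℝ) × (Fin d → ℝ)
  | 0 => (fun j => Real.sqrt 2 * α j, fun _ => 0)
  | k + 1 =>
      let uv := UViter x y α γ Bk k
      let β : Fin d → ℝ := fun j => uv.1 j * uv.2 j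
      let g := gradBatch x y (Bk k) β
      (fun j => uv.1 j - γ k * g j * uv.2 j, fun j => uv.2 j - γ k * g j * uv.1 j)

/-- the `u ⊙ v` parametrisation and the `½(w₊² − w₋²)` parametrisation, run with
the same stepsizes and batches, produce the same predictor iterates. -/
theorem stmt9 (d n : ℕ) (x : Fin n → Fin d → ℝ) (y : Fin n → ℝ)
    (α : Fin d → ℝ) (hα : ∀ j, 0 < α j)
    (γ : ℕ → ℝ) (hγ : ∀ k, 0 ≤ γ k)
    (Bk : ℕ → Finset (Fin n)) (hBk : ∀ k, (Bk k).Nonempty) :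
    ∀ k j, (UViter x y α γ Bk k).1 j * (UViter x y α γ Bk k).2 j =
      betaIter x y α γ Bk k j := by
  have hs2 : Real.sqrt 2 * Real.sqrt 2 = 2 := Real.mul_self_sqrt (by norm_num)
  have hs2sq : Real.sqrt 2 ^ 2 = 2 := Real.sq_sqrt (by norm_num)
  have hs2ne : Real.sqrt 2 ≠ 0 := by positivity
  have hprod : ∀ a b : ℝ, ((a + b) / Real.sqrt 2) * ((a - b) / Real.sqrt 2)
      = (a ^ 2 - b ^ 2) / 2 := by
    intro a b; rw [div_mul_div_comm, hs2]; ring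
  have key : ∀ k, (∀ j, (UViter x y α γ Bk k).1 j =
      ((Witer x y α γ Bk k).1 j + (Witer x y α γ Bk k).2 j) / Real.sqrt 2) ∧
      (∀ j, (UViter x y α γ Bk k).2 j =
      ((Witer x y α γ Bk k).1 j - (Witer x y α γ Bk k).2 j) / Real.sqrt 2) := by
    intro k
    induction k with
    | zero =>
      refine ⟨fun j => ?_, fun j => ?_⟩
      · show Real.sqrt 2 * α j = (α j + α j) / Real.sqrt 2
        field_simp
        ring_nf
        rw [hs2sq]; ring
      · show (0 : ℝ) = (α j - α j) / Real.sqrt 2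
        simp
    | succ k ih =>
      obtain ⟨ih1, ih2⟩ := ih
      have hbeta : (fun j => (UViter x y α γ Bk k).1 j * (UViter x y α γ Bk k).2 j)
          = (fun j => ((Witer x y α γ Bk k).1 j ^ 2 - (Witer x y α γ Bk k).2 j ^ 2) / 2) := by
        funext j
        rw [ih1 j, ih2 j, hprod]
      refine ⟨fun j => ?_, fun j => ?_⟩ <;>
        simp only [UViter, Witer, hbeta] <;>
        rw [ih1 j, ih2 j] <;> field_simp <;> ring
  intro k j
  obtain ⟨h1, h2⟩ := key k
  rw [h1 j, h2 j, hprod, betaIter]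

end
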